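/- arXiv:2412.14728 — 4 statements merged into one kernel-verified Lean document; each statement's English description precedes it below -/
import Mathlib

section
/- Let φ_b be an LTLf formula over P, let V = {U₁, …, Uₙ} ⊆ P, and let N be an NFA over 2^P with L(N) = { t | t ⊨ ¬φ_b }. Then for every finite trace t over 2^P: t is accepted by the complement of D(N_{∃U₁,…,Uₙ}) if and only if every trace t' with t' ~_{-V} t satisfies t' ⊨ φ_b. -/
/-! ## Automata -/

/-- A deterministic finite automaton (DFA) over alphabet `α` with states `S`:
a designated initial state, a total transition function, and a set of accepting states. -/
structure DFA' (α : Type*) (S : Type*) where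
  start : S
  step : S → α → S
  accept : Set S

namespace DFA'

variable {α S : Type*}

/-- The state reached from `s` after reading the word `w`. -/
def evalFrom (M : DFA' α S) (s : S) (w : List α) : S :=
  w.foldl M.step s

/-- A DFA accepts a finite word iff its unique run from the initial state ends in an
accepting state. -/
def Accepts (M : DFA' α S) (w : List α) : Prop :=
  M.evalFrom M.start w ∈ M.accept

/-- The complement of a DFA, obtained by complementing its set of accepting states. -/
def compl (M : DFA' α S) : DFA' α S :=
  { M with accept := M.acceptᶜ }

/-- The synchronous product of two DFAs over the same alphabet. -/
def prod {S₁ S₂ : Type*} (M₁ : DFA' α S₁) (M₂ : DFA' α S₂) : DFA' α (S₁ × S₂) where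
  start := (M₁.start, M₂.start)
  step := fun p a => (M₁.step p.1 a, M₂.step p.2 a)
  accept := {p | p.1 ∈ M₁.accept ∧ p.2 ∈ M₂.accept}

end DFA'

/-- A nondeterministic finite automaton (NFA) over alphabet `α` with states `S`:
a designated initial state, a transition function into sets of states, and a set of
accepting states. -/
structure NFA' (α : Type*) (S : Type*) where
  start : S
  step : S → α → Set S
  accept : Set S

namespace NFA'

variable {α S : Type*}

/-- One step of the subset construction. -/
def stepSet (M : NFA' α S) (T : Set S) (a : α) : Set S :=
  ⋃ s ∈ T, M.step s a

/-- The set of states reachable from a state in `T` after reading the word `w`. -/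
def evalFrom (M : NFA' α S) (T : Set S) (w : List α) : Set S :=
  w.foldl M.stepSet T

/-- An NFA accepts a finite word iff some run from the initial state on that word
ends in an accepting state. -/
def Accepts (M : NFA' α S) (w : List α) : Prop :=
  ∃ s ∈ M.evalFrom {M.start} w, s ∈ M.accept

/-- The determinization `D(M)` of an NFA `M` by the subset construction. -/
def det (M : NFA' α S) : DFA' α (Set S) where
  start := {M.start}
  step := M.stepSet
  accept := {T | ∃ s ∈ T, s ∈ M.accept}

end NFA'

/-- A DFA viewed as an NFA. -/
def DFA'.toNFA' {α S : Type*} (M : DFA' α S) : NFA' α S where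
  start := M.start
  step := fun s a => {M.step s a}
  accept := M.accept

/-! ## Traces -/

/-- Two finite traces over `2^P` are equivalent up to the variables in `V`
(written `t' ~_{-V} t` in the paper): they have the same length and at every position
they contain exactly the same variables of `P \ V`. -/
def EquivUpTo {P : Type*} (V : Set P) (t t' : List (Set P)) : Prop :=
  List.Forall₂ (fun a b => a \ V = b \ V) t t'

/-- The existentially abstracted NFA `N_{∃V}`: same states, initial and accepting states,
and `δ'(s, a) = { s' | ∃ a' with a ~_{-V} a' and s' ∈ δ(s, a') }`. -/
def NFA'.abstract {P S : Type*} (M : NFA' (Set P) S) (V : Set P) : NFA' (Set P) S :=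
  { M with step := fun s a => {s' | ∃ a' : Set P, a \ V = a' \ V ∧ s' ∈ M.step s a'} }

/-- The belief-state DFA `G^rel_A` of a DFA `A` over `2^{X ∪ Y}` with unreliable input
variables `Xunr ⊆ X`: states are sets of states of `A`, the initial state is `{s₀}`,
`∂(B, a) = { s' | ∃ s ∈ B, ∃ a' with a ~_{-Xunr} a' and δ(s, a') = s' }`, and a belief
state `B` is accepting iff `B ⊆ F`. -/
def DFA'.belief {X Y S : Type*} (A : DFA' (Set (X ⊕ Y)) S) (Xunr : Set X) :
    DFA' (Set (X ⊕ Y)) (Set S) where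
  start := {A.start}
  step := fun B a => {s' | ∃ s ∈ B, ∃ a' : Set (X ⊕ Y),
    a \ (Sum.inl '' Xunr) = a' \ (Sum.inl '' Xunr) ∧ A.step s a' = s'}
  accept := {B | B ⊆ A.accept}

/-! ## LTLf and QLTLf -/

/-- LTLf formulas over propositional variables `P`. -/
inductive LTLf (P : Type*) where
  | atom : P → LTLf P
  | not : LTLf P → LTLf P
  | and : LTLf P → LTLf P → LTLf P
  | next : LTLf P → LTLf P
  | until_ : LTLf P → LTLf P → LTLf P

/-- Satisfaction `t, i ⊨ φ` of an LTLf formula at position `i` (0-indexed) of a finite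
trace `t`. -/
def LTLf.Sat {P : Type*} (t : List (Set P)) : LTLf P → ℕ → Prop
  | .atom a, i => ∃ h : i < t.length, a ∈ t.get ⟨i, h⟩
  | .not φ, i => ¬ LTLf.Sat t φ i
  | .and φ ψ, i => LTLf.Sat t φ i ∧ LTLf.Sat t ψ i
  | .next φ, i => i + 1 < t.length ∧ LTLf.Sat t φ (i + 1)
  | .until_ φ ψ, i => ∃ j, i ≤ j ∧ j < t.length ∧ LTLf.Sat t ψ j ∧
      ∀ k, i ≤ k → k < j → LTLf.Sat t φ k

/-- QLTLf formulas over propositional variables `P`: LTLf extended with second-order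
existential quantification over propositional variables. -/
inductive QLTLf (P : Type*) where
  | atom : P → QLTLf P
  | not : QLTLf P → QLTLf P
  | and : QLTLf P → QLTLf P → QLTLf P
  | next : QLTLf P → QLTLf P
  | until_ : QLTLf P → QLTLf P → QLTLf P
  | ex : P → QLTLf P → QLTLf P

/-- Satisfaction `t, i ⊨ φ` of a QLTLf formula at position `i` (0-indexed) of a finite
trace `t`; `t, i ⊨ ∃X. φ` iff there is a trace `t'` with `t' ~_{-{X}} t` and `t', i ⊨ φ`. -/
def QLTLf.Sat {P : Type*} : List (Set P) → QLTLf P → ℕ → Prop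
  | t, .atom a, i => ∃ h : i < t.length, a ∈ t.get ⟨i, h⟩
  | t, .not φ, i => ¬ QLTLf.Sat t φ i
  | t, .and φ ψ, i => QLTLf.Sat t φ i ∧ QLTLf.Sat t ψ i
  | t, .next φ, i => i + 1 < t.length ∧ QLTLf.Sat t φ (i + 1)
  | t, .until_ φ ψ, i => ∃ j, i ≤ j ∧ j < t.length ∧ QLTLf.Sat t ψ j ∧
      ∀ k, i ≤ k → k < j → QLTLf.Sat t φ k
  | t, .ex p φ, i => ∃ t', EquivUpTo {p} t' t ∧ QLTLf.Sat t' φ i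

/-- Universal second-order quantification `∀X. φ := ¬∃X. ¬φ`. -/
def QLTLf.all {P : Type*} (p : P) (φ : QLTLf P) : QLTLf P :=
  .not (.ex p (.not φ))

/-- The embedding of (quantifier-free) LTLf formulas into QLTLf. -/
def LTLf.toQ {P : Type*} : LTLf P → QLTLf P
  | .atom a => .atom a
  | .not φ => .not φ.toQ
  | .and φ ψ => .and φ.toQ ψ.toQ
  | .next φ => .next φ.toQ
  | .until_ φ ψ => .until_ φ.toQ ψ.toQ

/-! ## Strategies, plays and synthesis -/

section Synthesis

variable {X Y : Type*}

/-- The letter `X ∪ Y ∈ 2^{X ∪ Y}` combining an input letter `A ∈ 2^X` and an output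
letter `B ∈ 2^Y`. -/
def combine (A : Set X) (B : Set Y) : Set (X ⊕ Y) :=
  Sum.inl '' A ∪ Sum.inr '' B

/-- The finite trace `((X₀ ∪ Y₀), …, (X_k ∪ Y_k))` with `Y_i = σ(X₀, …, X_{i-1})`
produced by the strategy `σ` against the infinite input sequence `env`. -/
def playTrace (σ : List (Set X) → Set Y) (env : ℕ → Set X) (k : ℕ) :
    List (Set (X ⊕ Y)) :=
  (List.range (k + 1)).map fun i => combine (env i) (σ ((List.range i).map env))

/-- The strategy `σ` is winning for the agent in the DFA game on `G`: for every infinite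
input sequence there is a `k` such that the run of `G` on the induced finite trace ends
in an accepting state. -/
def Winning {S : Type*} (G : DFA' (Set (X ⊕ Y)) S) (σ : List (Set X) → Set Y) : Prop :=
  ∀ env : ℕ → Set X, ∃ k : ℕ, G.Accepts (playTrace σ env k)

/-- The strategy `σ` realizes the LTLf formula `φ` in standard LTLf synthesis. -/
def Realizes (σ : List (Set X) → Set Y) (φ : LTLf (X ⊕ Y)) : Prop :=
  ∀ env : ℕ → Set X, ∃ k : ℕ, LTLf.Sat (playTrace σ env k) φ 0

/-- The strategy `σ` realizes QLTLf synthesis for the QLTLf formula `ψ`. -/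
def RealizesQ (σ : List (Set X) → Set Y) (ψ : QLTLf (X ⊕ Y)) : Prop :=
  ∀ env : ℕ → Set X, ∃ k : ℕ, QLTLf.Sat (playTrace σ env k) ψ 0

/-- The strategy `σ` solves LTLf synthesis under unreliable input for main specification
`φm`, backup specification `φb`, and unreliable input variables `Xunr`: for every
infinite input sequence there is a `k` such that the induced finite trace `t` satisfies
`φm` and every trace `t'` with `t' ~_{-Xunr} t` satisfies `φb`. -/
def SolvesUnreliable (σ : List (Set X) → Set Y) (φm φb : LTLf (X ⊕ Y))
    (Xunr : Set X) : Prop :=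
  ∀ env : ℕ → Set X, ∃ k : ℕ,
    LTLf.Sat (playTrace σ env k) φm 0 ∧
    ∀ t', EquivUpTo (Sum.inl '' Xunr) t' (playTrace σ env k) → LTLf.Sat t' φb 0

end Synthesis
section Aux

variable {α S : Type*}

lemma NFA'.stepSet_iUnion {ι : Sort*} (M : NFA' α S) (T : ι → Set S) (a : α) :
    M.stepSet (⋃ i, T i) a = ⋃ i, M.stepSet (T i) a := by
  ext s; simp [NFA'.stepSet]; tauto

lemma NFA'.evalFrom_iUnion {ι : Sort*} (M : NFA' α S) (T : ι → Set S) (w : List α) :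
    M.evalFrom (⋃ i, T i) w = ⋃ i, M.evalFrom (T i) w := by
  induction w generalizing T with
  | nil => simp [NFA'.evalFrom]
  | cons a w ih =>
      show M.evalFrom (M.stepSet (⋃ i, T i) a) w = _
      rw [NFA'.stepSet_iUnion, ih]; rfl

lemma NFA'.mem_abstract_evalFrom {P : Type*} (M : NFA' (Set P) S) (V : Set P)
    (T : Set S) (t : List (Set P)) (s : S) :
    s ∈ (M.abstract V).evalFrom T t ↔
      ∃ t', EquivUpTo V t' t ∧ s ∈ M.evalFrom T t' := by
  induction t generalizing T with
  | nil =>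
      simp only [NFA'.evalFrom, List.foldl_nil]
      constructor
      · intro hs; exact ⟨[], List.Forall₂.nil, hs⟩
      · rintro ⟨t', h, hs⟩; cases h; exact hs
  | cons a w ih =>
      show s ∈ (M.abstract V).evalFrom ((M.abstract V).stepSet T a) w ↔ _
      rw [ih]
      have hstep : (M.abstract V).stepSet T a
          = ⋃ a' : {a' : Set P // a \ V = a' \ V}, M.stepSet T a'.1 := by
        ext s'
        simp only [NFA'.stepSet, NFA'.abstract, Set.mem_iUnion, Set.mem_setOf_eq]
        constructor
        · rintro ⟨u, hu, a', ha', hs'⟩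
          exact ⟨⟨a', ha'⟩, u, hu, hs'⟩
        · rintro ⟨⟨a', ha'⟩, u, hu, hs'⟩
          exact ⟨u, hu, a', ha', hs'⟩
      constructor
      · rintro ⟨w', hw', hs⟩
        rw [hstep, NFA'.evalFrom_iUnion] at hs
        simp only [Set.mem_iUnion] at hs
        obtain ⟨⟨a', ha'⟩, hs⟩ := hs
        exact ⟨a' :: w', List.Forall₂.cons ha'.symm hw', hs⟩
      · rintro ⟨t', h, hs⟩
        cases h with
        | cons ha hw =>
            rename_i a' w'
            refine ⟨w', hw, ?_⟩
            rw [hstep, NFA'.evalFrom_iUnion]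
            simp only [Set.mem_iUnion]
            exact ⟨⟨a', ha.symm⟩, hs⟩

end Aux

/-- Let `φb` be an LTLf formula over `P`, `V = {U₁, …, Uₙ} ⊆ P`, and `N`
an NFA over `2^P` with `L(N) = { t | t ⊨ ¬φb }`. Then for every finite trace `t`:
`t` is accepted by the complement of `D(N_{∃U₁,…,Uₙ})` iff every trace `t'` with
`t' ~_{-V} t` satisfies `t' ⊨ φb`. -/
theorem compl_det_abstract_backup_iff {P S : Type*}
    (φb : LTLf P) (V : Finset P) (N : NFA' (Set P) S)
    (hN : ∀ t : List (Set P), t ≠ [] → (N.Accepts t ↔ LTLf.Sat t (.not φb) 0))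
    (t : List (Set P)) (ht : t ≠ []) :
    ((N.abstract ↑V).det.compl).Accepts t ↔
      ∀ t', EquivUpTo (↑V) t' t → LTLf.Sat t' φb 0 := by
  have habs : (N.abstract ↑V).Accepts t ↔
      ∃ t', EquivUpTo (↑V) t' t ∧ N.Accepts t' := by
    constructor
    · rintro ⟨s, hs, hacc⟩
      rw [NFA'.mem_abstract_evalFrom] at hs
      obtain ⟨t', ht', hs⟩ := hs
      exact ⟨t', ht', s, hs, hacc⟩
    · rintro ⟨t', ht', s, hs, hacc⟩
      exact ⟨s, (NFA'.mem_abstract_evalFrom N ↑V _ t s).2 ⟨t', ht', hs⟩, hacc⟩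
  have hcompl : ((N.abstract ↑V).det.compl).Accepts t ↔ ¬ (N.abstract ↑V).Accepts t := by
    simp only [DFA'.Accepts, DFA'.compl, NFA'.det, NFA'.Accepts]
    rfl
  rw [hcompl, habs]
  push_neg
  constructor
  · intro h t' ht'
    have hne : t' ≠ [] := by
      intro hnil; subst hnil; cases ht'; exact ht rfl
    have := h t' ht'
    rw [hN t' hne] at this
    exact not_not.mp this
  · intro h t' ht'
    have hne : t' ≠ [] := by
      intro hnil; subst hnil; cases ht'; exact ht rfl
    rw [hN t' hne]
    exact not_not.mpr (h t' ht')
end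

section
/- Let φ_m and φ_b be LTLf formulas over X ⊎ Y with X = X_rel ⊎ X_unr. Let A_{φ_m} and A_{φ_b} be DFAs over 2^{X∪Y} with L(A_{φ_m}) = { t | t ⊨ φ_m } and L(A_{φ_b}) = { t | t ⊨ φ_b }. Then a strategy σ : (2^X)* → 2^Y is a winning strategy for the agent in the DFA game on the synchronous product A_{φ_m} ⊗ G^rel_{A_{φ_b}} of A_{φ_m} with the belief-state DFA of A_{φ_b} if and only if σ solves LTLf synthesis under unreliable input for (φ_m, φ_b, X_unr). -/

lemma prod_eval {α S₁ S₂ : Type*} (M₁ : DFA' α S₁) (M₂ : DFA' α S₂)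
    (w : List α) (s₁ : S₁) (s₂ : S₂) :
    (M₁.prod M₂).evalFrom (s₁, s₂) w = (M₁.evalFrom s₁ w, M₂.evalFrom s₂ w) := by
  induction w generalizing s₁ s₂ with
  | nil => rfl
  | cons a w ih => simpa [DFA'.evalFrom, DFA'.prod] using ih _ _

lemma prod_accepts {α S₁ S₂ : Type*} (M₁ : DFA' α S₁) (M₂ : DFA' α S₂) (w : List α) :
    (M₁.prod M₂).Accepts w ↔
      M₁.evalFrom M₁.start w ∈ M₁.accept ∧ M₂.evalFrom M₂.start w ∈ M₂.accept := by
  unfold DFA'.Accepts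
  rw [show (M₁.prod M₂).start = (M₁.start, M₂.start) from rfl, prod_eval]
  exact Iff.rfl

lemma belief_eval {X Y S : Type*} (A : DFA' (Set (X ⊕ Y)) S) (Xunr : Set X)
    (w : List (Set (X ⊕ Y))) (B : Set S) :
    (A.belief Xunr).evalFrom B w =
      {s' | ∃ s ∈ B, ∃ w', List.Forall₂
        (fun a b => a \ (Sum.inl '' Xunr) = b \ (Sum.inl '' Xunr)) w w' ∧
        A.evalFrom s w' = s'} := by
  induction w generalizing B with
  | nil =>
    ext s'
    show s' ∈ B ↔ _
    constructor
    · intro h; exact ⟨s', h, [], List.Forall₂.nil, rfl⟩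
    · rintro ⟨s, hs, w', hw', he⟩
      cases hw'
      exact he ▸ hs
  | cons a w ih =>
    ext s'
    simp only [DFA'.evalFrom, List.foldl_cons]
    rw [show List.foldl (A.belief Xunr).step ((A.belief Xunr).step B a) w
        = (A.belief Xunr).evalFrom ((A.belief Xunr).step B a) w from rfl, ih]
    constructor
    · rintro ⟨s₁, hs₁, w', hw', he⟩
      obtain ⟨s, hs, a', ha', hstep⟩ := hs₁
      exact ⟨s, hs, a' :: w', List.Forall₂.cons ha' hw', by
        simp [DFA'.evalFrom] at he ⊢; rw [hstep]; exact he⟩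
    · rintro ⟨s, hs, w', hw', he⟩
      cases hw' with
      | cons ha' hw'' =>
        rename_i a' w''
        exact ⟨A.step s a', ⟨s, hs, a', ha', rfl⟩, w'', hw'', he⟩

/-- Let `φm`, `φb` be LTLf formulas over `X ⊎ Y` with unreliable input
variables `Xunr ⊆ X`, and let `Am`, `Ab` be DFAs with `L(Am) = { t | t ⊨ φm }` and
`L(Ab) = { t | t ⊨ φb }`. Then a strategy `σ` is winning for the agent in the DFA game on
the synchronous product `Am ⊗ G^rel_{Ab}` iff `σ` solves LTLf synthesis under unreliable
input for `(φm, φb, Xunr)`. -/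
theorem belief_technique_correct {X Y S₁ S₂ : Type*}
    (φm φb : LTLf (X ⊕ Y)) (Xunr : Set X)
    (Am : DFA' (Set (X ⊕ Y)) S₁)
    (hAm : ∀ t : List (Set (X ⊕ Y)), t ≠ [] → (Am.Accepts t ↔ LTLf.Sat t φm 0))
    (Ab : DFA' (Set (X ⊕ Y)) S₂)
    (hAb : ∀ t : List (Set (X ⊕ Y)), t ≠ [] → (Ab.Accepts t ↔ LTLf.Sat t φb 0))
    (σ : List (Set X) → Set Y) :
    Winning (Am.prod (Ab.belief Xunr)) σ ↔
      SolvesUnreliable σ φm φb Xunr := by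
  have hne : ∀ (env : ℕ → Set X) (k : ℕ), playTrace σ env k ≠ [] := by
    intro env k h
    have := congrArg List.length h
    simp [playTrace] at this
  have key : ∀ (t : List (Set (X ⊕ Y))),
      (Am.prod (Ab.belief Xunr)).Accepts t ↔
        (Am.evalFrom Am.start t ∈ Am.accept ∧
          ∀ t', List.Forall₂ (fun a b => a \ (Sum.inl '' Xunr) = b \ (Sum.inl '' Xunr)) t t' →
            Ab.evalFrom Ab.start t' ∈ Ab.accept) := by
    intro t
    rw [prod_accepts]
    have hs : (Ab.belief Xunr).start = ({Ab.start} : Set S₂) := rfl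
    have ha : (Ab.belief Xunr).accept = {B | B ⊆ Ab.accept} := rfl
    rw [hs, ha, belief_eval]
    simp only [Set.mem_setOf_eq]
    constructor
    · rintro ⟨h1, h2⟩
      refine ⟨h1, fun t' ht' => h2 ?_⟩
      exact ⟨Ab.start, rfl, t', ht', rfl⟩
    · rintro ⟨h1, h2⟩
      refine ⟨h1, ?_⟩
      rintro s' ⟨s, hs0, w', hw', he⟩
      cases hs0
      exact he ▸ h2 w' hw'
  constructor
  · intro hw env
    obtain ⟨k, hk⟩ := hw env
    rw [key] at hk
    refine ⟨k, (hAm _ (hne env k)).mp hk.1, ?_⟩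
    intro t' ht'
    have hl := List.Forall₂.length_eq ht'
    have ht'ne : t' ≠ [] := by
      intro h; subst h; simp [playTrace] at hl
    rw [← hAb _ ht'ne]
    exact hk.2 t' ((ht'.imp fun _ _ e => e.symm).flip)
  · intro hs env
    obtain ⟨k, hm, hb⟩ := hs env
    refine ⟨k, ?_⟩
    rw [key]
    refine ⟨(hAm _ (hne env k)).mpr hm, ?_⟩
    intro t' ht'
    have hl := List.Forall₂.length_eq ht'
    have ht'ne : t' ≠ [] := by
      intro h; subst h; simp [playTrace] at hl
    exact (hAb _ ht'ne).mpr (hb t' ((ht'.imp fun _ _ e => e.symm).flip))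
end

section
/- Let ψ be a QLTLf formula over P, let X₁, …, Xₙ ∈ P, and let A be a DFA over 2^P with L(A) = { t | t ⊨ ψ }. Let Ā denote the complement of A. Then the automaton complement(D(Ā_{∃X₁,…,Xₙ})) recognizes exactly the models of the universally quantified formula: L(complement(D(Ā_{∃X₁,…,Xₙ}))) = { t | t ⊨ ∀X₁. … ∀Xₙ. ψ }. -/
section Aux

variable {P S : Type*}

private lemma equiv_split {u : P} {V : Set P} {t t' : List (Set P)}
    (h : EquivUpTo (insert u V) t' t) :
    ∃ t₁, EquivUpTo {u} t₁ t ∧ EquivUpTo V t' t₁ := by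
  induction h with
  | nil => exact ⟨[], List.Forall₂.nil, List.Forall₂.nil⟩
  | @cons a' a t' t ha _ ih =>
    obtain ⟨t₁, h1, h2⟩ := ih
    refine ⟨((a \ {u}) ∪ (a' ∩ {u})) :: t₁, List.Forall₂.cons ?_ h1, List.Forall₂.cons ?_ h2⟩
    · ext x
      simp only [Set.mem_diff, Set.mem_union, Set.mem_inter_iff, Set.mem_singleton_iff]
      tauto
    · have hx := fun x => Set.ext_iff.mp ha x
      ext x
      have := hx x
      simp only [Set.mem_diff, Set.mem_insert_iff, Set.mem_union, Set.mem_inter_iff,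
        Set.mem_singleton_iff, not_or] at this ⊢
      tauto

private lemma equiv_comp {u : P} {V : Set P} {t t₁ t' : List (Set P)}
    (h1 : EquivUpTo {u} t₁ t) (h2 : EquivUpTo V t' t₁) :
    EquivUpTo (insert u V) t' t := by
  induction h1 generalizing t' with
  | nil => cases h2; exact List.Forall₂.nil
  | @cons a₁ a t₁ t ha _ ih =>
    cases h2 with
    | cons hb h2' =>
      refine List.Forall₂.cons ?_ (ih h2')
      have hx := fun x => Set.ext_iff.mp ha x
      have hy := fun x => Set.ext_iff.mp hb x
      ext x
      have h1' := hx x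
      have h2'' := hy x
      simp only [Set.mem_diff, Set.mem_insert_iff, Set.mem_singleton_iff, not_or]
        at h1' h2'' ⊢
      tauto

private lemma foldr_all_sat (ψ : QLTLf P) (Us : List P) (t : List (Set P)) :
    QLTLf.Sat t (Us.foldr QLTLf.all ψ) 0 ↔
      ∀ t', EquivUpTo {x | x ∈ Us} t' t → QLTLf.Sat t' ψ 0 := by
  induction Us generalizing t with
  | nil =>
    have hV : {x : P | x ∈ ([] : List P)} = (∅ : Set P) := by
      ext x; simp
    constructor
    · intro h t' ht'
      have : t' = t := by
        rw [hV] at ht'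
        have : List.Forall₂ (fun a b : Set P => a = b) t' t := by
          refine ht'.imp ?_
          intro a b hab
          simpa using hab
        exact List.forall₂_eq_eq_eq ▸ this
      rwa [this]
    · intro h
      refine h t ?_
      rw [hV]
      exact List.forall₂_same.mpr (fun a _ => rfl)
  | cons u us ih =>
    have hV : {x : P | x ∈ (u :: us)} = insert u {x : P | x ∈ us} := by
      ext x; simp
    rw [hV]
    show (¬ ∃ t₁, EquivUpTo {u} t₁ t ∧ ¬ QLTLf.Sat t₁ (us.foldr QLTLf.all ψ) 0) ↔ _
    push_neg
    constructor
    · intro h t' ht'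
      obtain ⟨t₁, h1, h2⟩ := equiv_split ht'
      exact (ih t₁).mp (h t₁ h1) t' h2
    · intro h t₁ h1
      exact (ih t₁).mpr (fun t' h2 => h t' (equiv_comp h1 h2))

private lemma eval_abstract (M : DFA' (Set P) S) (V : Set P) :
    ∀ (w : List (Set P)) (T : Set S) (s' : S),
      s' ∈ (M.toNFA'.abstract V).evalFrom T w ↔
        ∃ s ∈ T, ∃ w', List.Forall₂ (fun a b : Set P => a \ V = b \ V) w w' ∧
          M.evalFrom s w' = s' := by
  intro w
  induction w with
  | nil =>
    intro T s'
    constructor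
    · intro h
      exact ⟨s', h, [], List.Forall₂.nil, rfl⟩
    · rintro ⟨s, hs, w', hw', hev⟩
      cases hw'
      exact hev ▸ hs
  | cons a w ih =>
    intro T s'
    show s' ∈ (M.toNFA'.abstract V).evalFrom ((M.toNFA'.abstract V).stepSet T a) w ↔ _
    rw [ih]
    constructor
    · rintro ⟨s₁, hs₁, w', hw', hev⟩
      simp only [NFA'.stepSet, Set.mem_iUnion] at hs₁
      obtain ⟨s, hs, hstep⟩ := hs₁
      obtain ⟨a', ha', hs₁'⟩ := hstep
      simp only [DFA'.toNFA', Set.mem_singleton_iff] at hs₁'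
      exact ⟨s, hs, a' :: w', List.Forall₂.cons ha' hw', by
        simpa [DFA'.evalFrom, hs₁'] using hev⟩
    · rintro ⟨s, hs, w'', hw'', hev⟩
      rw [List.forall₂_cons_left_iff] at hw''
      obtain ⟨a', w', ha', hw', rfl⟩ := hw''
      · refine ⟨M.step s a', ?_, w', hw', ?_⟩
        · simp only [NFA'.stepSet, Set.mem_iUnion]
          exact ⟨s, hs, a', ha', by simp [NFA'.abstract, DFA'.toNFA']⟩
        · simpa [DFA'.evalFrom] using hev

end Aux

/-- Let `ψ` be a QLTLf formula over `P`, `X₁, …, Xₙ ∈ P`, and `A` a DFA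
over `2^P` with `L(A) = { t | t ⊨ ψ }`, with complement `Ā`. Then
`complement(D(Ā_{∃X₁,…,Xₙ}))` recognizes exactly the models of `∀X₁. … ∀Xₙ. ψ`. -/
theorem compl_det_abstract_recognizes_forall {P S : Type*}
    (ψ : QLTLf P) (Us : List P) (A : DFA' (Set P) S)
    (hA : ∀ t : List (Set P), t ≠ [] → (A.Accepts t ↔ QLTLf.Sat t ψ 0)) :
    ∀ t : List (Set P), t ≠ [] →
      (((A.compl.toNFA'.abstract {x | x ∈ Us}).det.compl).Accepts t ↔
        QLTLf.Sat t (Us.foldr QLTLf.all ψ) 0) := by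
  intro t ht
  rw [foldr_all_sat]
  have key : (((A.compl.toNFA'.abstract {x : P | x ∈ Us}).det.compl).Accepts t) ↔
      ¬ ∃ s', s' ∈ (A.compl.toNFA'.abstract {x : P | x ∈ Us}).evalFrom {A.compl.start} t
        ∧ s' ∉ A.accept := Iff.rfl
  rw [key]
  constructor
  · intro h t' ht'
    have hlen : t'.length = t.length := ht'.length_eq
    have ht'ne : t' ≠ [] := by
      intro h0
      apply ht
      apply List.length_eq_zero_iff.mp
      rw [← hlen, h0]
      rfl
    rw [← hA t' ht'ne]
    by_contra hacc
    apply h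
    refine ⟨A.evalFrom A.start t', ?_, hacc⟩
    rw [eval_abstract A.compl]
    refine ⟨A.compl.start, rfl, t', ?_, rfl⟩
    exact (ht'.imp (fun _ _ h => h.symm)).flip
  · intro h
    rintro ⟨s', hs', hacc⟩
    rw [eval_abstract A.compl] at hs'
    obtain ⟨s, hs, w', hw', hev⟩ := hs'
    have hsstart : s = A.start := hs
    have hw'ne : w' ≠ [] := by
      intro h0
      apply ht
      apply List.length_eq_zero_iff.mp
      rw [hw'.length_eq, h0]
      rfl
    have hsat : QLTLf.Sat w' ψ 0 := h w' ((hw'.imp (fun _ _ h => h.symm)).flip)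
    have hAcc : A.Accepts w' := (hA w' hw'ne).mpr hsat
    apply hacc
    rw [← hev, hsstart]
    exact hAcc
end

section
/- Let φ be a QLTLf formula in prenex normal form, i.e., φ = Q₁X₁. Q₂X₂. … QₘXₘ. ψ with each Qᵢ ∈ {∃, ∀} and ψ an (quantifier-free) LTLf formula. If there exists an NFA recognizing exactly the models of ψ (i.e., an NFA A with L(A) = { t | t ⊨ ψ }), then there exists a DFA A_φ with L(A_φ) = { t | t ⊨ φ }. -/
/-- A quantifier prefix applied to a matrix: `Q₁X₁. … QₘXₘ. ψ`, where `true` codes `∃`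
and `false` codes `∀`. -/
def QLTLf.prenex {P : Type*} (qs : List (Bool × P)) (ψ : QLTLf P) : QLTLf P :=
  qs.foldr (fun q acc => if q.1 then QLTLf.ex q.2 acc else QLTLf.all q.2 acc) ψ

section Aux

variable {α S : Type*}

theorem NFA'.mem_stepSet (M : NFA' α S) {s : S} {T : Set S} {a : α} :
    s ∈ M.stepSet T a ↔ ∃ t ∈ T, s ∈ M.step t a := by
  simp [NFA'.stepSet]

theorem NFA'.stepSet_singleton (M : NFA' α S) (t : S) (a : α) :
    M.stepSet {t} a = M.step t a := by
  simp [NFA'.stepSet]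

theorem NFA'.evalFrom_cons (M : NFA' α S) (T : Set S) (a : α) (w : List α) :
    M.evalFrom T (a :: w) = M.evalFrom (M.stepSet T a) w := rfl

theorem NFA'.mem_evalFrom (M : NFA' α S) {s : S} {T : Set S} {w : List α} :
    s ∈ M.evalFrom T w ↔ ∃ t ∈ T, s ∈ M.evalFrom {t} w := by
  induction w generalizing T with
  | nil => simp [NFA'.evalFrom]
  | cons a w ih =>
    rw [NFA'.evalFrom_cons, ih]
    constructor
    · rintro ⟨s1, hs1, hs⟩
      rw [NFA'.mem_stepSet] at hs1
      obtain ⟨t, ht, hstep⟩ := hs1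
      refine ⟨t, ht, ?_⟩
      rw [NFA'.evalFrom_cons, ih]
      exact ⟨s1, by rwa [NFA'.stepSet_singleton], hs⟩
    · rintro ⟨t, ht, hs⟩
      rw [NFA'.evalFrom_cons, ih, NFA'.stepSet_singleton] at hs
      obtain ⟨s1, hs1, hs⟩ := hs
      exact ⟨s1, (M.mem_stepSet).2 ⟨t, ht, hs1⟩, hs⟩

theorem NFA'.det_accepts (M : NFA' α S) (w : List α) :
    M.det.Accepts w ↔ M.Accepts w := Iff.rfl

theorem DFA'.compl_accepts (M : DFA' α S) (w : List α) :
    M.compl.Accepts w ↔ ¬ M.Accepts w := Iff.rfl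

theorem DFA'.toNFA'_evalFrom (M : DFA' α S) (s : S) (w : List α) :
    M.toNFA'.evalFrom {s} w = {M.evalFrom s w} := by
  induction w generalizing s with
  | nil => rfl
  | cons a w ih =>
    rw [NFA'.evalFrom_cons, NFA'.stepSet_singleton]
    exact ih (M.step s a)

theorem DFA'.toNFA'_accepts (M : DFA' α S) (w : List α) :
    M.toNFA'.Accepts w ↔ M.Accepts w := by
  unfold NFA'.Accepts
  rw [show M.toNFA'.start = M.start from rfl, M.toNFA'_evalFrom]
  simp [DFA'.Accepts, DFA'.toNFA']

theorem NFA'.abstract_mem_evalFrom {P S : Type*} (M : NFA' (Set P) S) (V : Set P)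
    {s0 s : S} {t : List (Set P)} :
    s ∈ (M.abstract V).evalFrom {s0} t ↔
      ∃ t', EquivUpTo V t' t ∧ s ∈ M.evalFrom {s0} t' := by
  induction t generalizing s0 with
  | nil =>
    constructor
    · intro h; exact ⟨[], List.Forall₂.nil, h⟩
    · rintro ⟨t', ht', hs⟩; cases ht'; exact hs
  | cons a t ih =>
    rw [NFA'.evalFrom_cons, NFA'.stepSet_singleton, NFA'.mem_evalFrom]
    constructor
    · rintro ⟨s1, hs1, hs⟩
      obtain ⟨a', ha', hstep⟩ := hs1
      obtain ⟨t'', ht'', hs'⟩ := ih.1 hs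
      refine ⟨a' :: t'', List.Forall₂.cons ha'.symm ht'', ?_⟩
      rw [NFA'.evalFrom_cons, NFA'.stepSet_singleton, NFA'.mem_evalFrom]
      exact ⟨s1, hstep, hs'⟩
    · rintro ⟨t', ht', hs⟩
      cases ht' with
      | cons ha ht'' =>
        rename_i a' t''
        rw [NFA'.evalFrom_cons, NFA'.stepSet_singleton, NFA'.mem_evalFrom] at hs
        obtain ⟨s1, hs1, hs⟩ := hs
        exact ⟨s1, ⟨a', ha.symm, hs1⟩, ih.2 ⟨t'', ht'', hs⟩⟩

theorem NFA'.abstract_accepts {P S : Type*} (M : NFA' (Set P) S) (V : Set P)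
    (t : List (Set P)) :
    (M.abstract V).Accepts t ↔ ∃ t', EquivUpTo V t' t ∧ M.Accepts t' := by
  unfold NFA'.Accepts
  constructor
  · rintro ⟨s, hs, hacc⟩
    obtain ⟨t', ht', hs'⟩ := (M.abstract_mem_evalFrom V).1 hs
    exact ⟨t', ht', s, hs', hacc⟩
  · rintro ⟨t', ht', s, hs', hacc⟩
    exact ⟨s, (M.abstract_mem_evalFrom V).2 ⟨t', ht', hs'⟩, hacc⟩

/-- Closure of NFA-recognizability under negation. -/
theorem nfa_not_closure {P : Type*} (φ : QLTLf P)
    (h : ∃ (S : Type) (A : NFA' (Set P) S),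
      ∀ t : List (Set P), t ≠ [] → (A.Accepts t ↔ QLTLf.Sat t φ 0)) :
    ∃ (S : Type) (A : NFA' (Set P) S),
      ∀ t : List (Set P), t ≠ [] → (A.Accepts t ↔ QLTLf.Sat t (QLTLf.not φ) 0) := by
  obtain ⟨S, A, hA⟩ := h
  refine ⟨Set S, (A.det.compl).toNFA', fun t ht => ?_⟩
  rw [DFA'.toNFA'_accepts, DFA'.compl_accepts, A.det_accepts, hA t ht]
  rfl

/-- Closure of NFA-recognizability under existential quantification. -/
theorem nfa_ex_closure {P : Type*} (φ : QLTLf P) (p : P)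
    (h : ∃ (S : Type) (A : NFA' (Set P) S),
      ∀ t : List (Set P), t ≠ [] → (A.Accepts t ↔ QLTLf.Sat t φ 0)) :
    ∃ (S : Type) (A : NFA' (Set P) S),
      ∀ t : List (Set P), t ≠ [] → (A.Accepts t ↔ QLTLf.Sat t (QLTLf.ex p φ) 0) := by
  obtain ⟨S, A, hA⟩ := h
  refine ⟨S, A.abstract {p}, fun t ht => ?_⟩
  rw [NFA'.abstract_accepts]
  show _ ↔ ∃ t', EquivUpTo {p} t' t ∧ QLTLf.Sat t' φ 0
  constructor
  · rintro ⟨t', ht', hAcc⟩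
    have hne : t' ≠ [] := by
      intro hnil; subst hnil; cases ht'; exact ht rfl
    exact ⟨t', ht', (hA t' hne).1 hAcc⟩
  · rintro ⟨t', ht', hSat⟩
    have hne : t' ≠ [] := by
      intro hnil; subst hnil; cases ht'; exact ht rfl
    exact ⟨t', ht', (hA t' hne).2 hSat⟩

theorem prenex_nfa_exists {P : Type*} (φ : QLTLf P) (qs : List (Bool × P))
    (h : ∃ (S : Type) (A : NFA' (Set P) S),
      ∀ t : List (Set P), t ≠ [] → (A.Accepts t ↔ QLTLf.Sat t φ 0)) :
    ∃ (S : Type) (A : NFA' (Set P) S),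
      ∀ t : List (Set P), t ≠ [] →
        (A.Accepts t ↔ QLTLf.Sat t (QLTLf.prenex qs φ) 0) := by
  induction qs with
  | nil => exact h
  | cons q qs ih =>
    obtain ⟨b, p⟩ := q
    have hrec := ih
    cases b with
    | true =>
      have := nfa_ex_closure (QLTLf.prenex qs φ) p hrec
      simpa [QLTLf.prenex] using this
    | false =>
      have := nfa_not_closure _ (nfa_ex_closure _ p (nfa_not_closure _ hrec))
      simpa [QLTLf.prenex, QLTLf.all] using this

end Aux

/-- Let `φ = Q₁X₁. … QₘXₘ. ψ` be a QLTLf formula in prenex normal form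
with quantifier-free (LTLf) matrix `ψ`. If there exists an NFA recognizing exactly the
models of `ψ`, then there exists a DFA `A_φ` with `L(A_φ) = { t | t ⊨ φ }`. -/
theorem prenex_qltlf_dfa_exists {P : Type*}
    (ψ : LTLf P) (qs : List (Bool × P))
    (h : ∃ (S : Type) (A : NFA' (Set P) S),
      ∀ t : List (Set P), t ≠ [] → (A.Accepts t ↔ QLTLf.Sat t ψ.toQ 0)) :
    ∃ (S' : Type) (D : DFA' (Set P) S'),
      ∀ t : List (Set P), t ≠ [] →
        (D.Accepts t ↔ QLTLf.Sat t (QLTLf.prenex qs ψ.toQ) 0) := by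
  obtain ⟨S, A, hA⟩ := prenex_nfa_exists ψ.toQ qs h
  exact ⟨Set S, A.det, fun t ht => (A.det_accepts t).trans (hA t ht)⟩
end
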